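/- Let D be a self-adjoint nonnegative operator on a finite-dimensional real inner product space, δ > 0, α > 0, τ > 0, σ ≥ 1/2, and let t^n = nτ, t^n_σ = σ t^{n+1} + (1−σ) t^n, w^n_σ = σ w^{n+1} + (1−σ) w^n. If vectors w^0, w^1, … satisfy the implicit two-level scheme (t^n_σ D + δ I)(w^{n+1} − w^n)/τ + α D w^n_σ = 0 for each n, then ‖w^{n+1}‖ ≤ ‖w^0‖ for all n. -/

import Mathlib

open Real

/-- Key comparison: for a self-adjoint nonnegative `D`, if `cB ≤ cA` and
`0 ≤ cA + cB` and `0 ≤ δ`, then `‖δ•v + cB•D v‖ ≤ ‖δ•v + cA•D v‖`. -/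
lemma aux_norm_le {V : Type*} [NormedAddCommGroup V] [InnerProductSpace ℝ V]
    (D : V →ₗ[ℝ] V) (hDpos : ∀ u : V, 0 ≤ (inner ℝ (D u) u : ℝ))
    (δ cA cB : ℝ) (hδ : 0 ≤ δ) (hBA : cB ≤ cA) (hsum : 0 ≤ cA + cB) (v : V) :
    ‖δ • v + cB • D v‖ ≤ ‖δ • v + cA • D v‖ := by
  have expand : ∀ c : ℝ, ‖δ • v + c • D v‖ ^ 2
      = δ ^ 2 * ‖v‖ ^ 2 + 2 * (δ * c) * (inner ℝ v (D v) : ℝ) + c ^ 2 * ‖D v‖ ^ 2 := by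
    intro c
    rw [norm_add_sq_real, real_inner_smul_left, real_inner_smul_right,
      norm_smul, norm_smul, Real.norm_eq_abs, Real.norm_eq_abs,
      mul_pow, mul_pow, sq_abs, sq_abs]
    ring
  have hp : 0 ≤ (inner ℝ v (D v) : ℝ) := by rw [real_inner_comm]; exact hDpos v
  have hsq : ‖δ • v + cB • D v‖ ^ 2 ≤ ‖δ • v + cA • D v‖ ^ 2 := by
    rw [expand, expand]
    nlinarith [mul_nonneg (mul_nonneg (sub_nonneg.2 hBA) hsum) (sq_nonneg ‖D v‖),
      mul_nonneg (mul_nonneg hδ (sub_nonneg.2 hBA)) hp]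
  nlinarith [norm_nonneg (δ • v + cB • D v), norm_nonneg (δ • v + cA • D v)]

/-- One-step stability: if `(δI + cA D) w1 = (δI + cB D) w0` with
`0 ≤ cA`, `cB ≤ cA`, `0 ≤ cA + cB`, then `‖w1‖ ≤ ‖w0‖`. -/
lemma aux_step {V : Type*} [NormedAddCommGroup V] [InnerProductSpace ℝ V]
    [FiniteDimensional ℝ V]
    (D : V →ₗ[ℝ] V) (hDpos : ∀ u : V, 0 ≤ (inner ℝ (D u) u : ℝ))
    (δ cA cB : ℝ) (hδ : 0 < δ) (hcA : 0 ≤ cA) (hBA : cB ≤ cA)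
    (hsum : 0 ≤ cA + cB) (w0 w1 : V)
    (heq : δ • w1 + cA • D w1 = δ • w0 + cB • D w0) : ‖w1‖ ≤ ‖w0‖ := by
  set A : V →ₗ[ℝ] V := δ • LinearMap.id + cA • D with hA
  have hAapply : ∀ u : V, A u = δ • u + cA • D u := by intro u; simp [hA]
  have hAinj : Function.Injective A := by
    rw [← LinearMap.ker_eq_bot, LinearMap.ker_eq_bot']
    intro v hv
    have h0 : (inner ℝ (A v) v : ℝ) = 0 := by rw [hv, inner_zero_left]
    rw [hAapply, inner_add_left, real_inner_smul_left, real_inner_smul_left,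
      real_inner_self_eq_norm_sq] at h0
    have hDv : 0 ≤ (inner ℝ (D v) v : ℝ) := hDpos v
    have hn : ‖v‖ ^ 2 ≤ 0 := by nlinarith [mul_nonneg hcA hDv]
    have : ‖v‖ = 0 := by nlinarith [norm_nonneg v, sq_nonneg ‖v‖]
    exact norm_eq_zero.mp this
  have hAsurj : Function.Surjective A :=
    (LinearMap.injective_iff_surjective).mp hAinj
  obtain ⟨v, hv⟩ := hAsurj w0
  -- Show w1 = δ • v + cB • D v
  have hcomm : A (δ • v + cB • D v) = δ • w0 + cB • D w0 := by
    rw [← hv, hAapply, hAapply]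
    simp only [map_add, map_smul]
    module
  have hw1 : A w1 = A (δ • v + cB • D v) := by
    rw [hAapply, heq, hcomm]
  have hw1' : w1 = δ • v + cB • D v := hAinj hw1
  have hw0' : w0 = δ • v + cA • D v := by rw [← hv, hAapply]
  rw [hw1', hw0']
  exact aux_norm_le D hDpos δ cA cB hδ.le hBA hsum v

theorem two_level_scheme_stability {V : Type*} [NormedAddCommGroup V]
    [InnerProductSpace ℝ V] [FiniteDimensional ℝ V]
    (D : V →ₗ[ℝ] V) (hDsym : ∀ u v : V, (inner ℝ (D u) v : ℝ) = inner ℝ u (D v))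
    (hDpos : ∀ u : V, 0 ≤ (inner ℝ (D u) u : ℝ))
    (δ α τ σ : ℝ) (hδ : 0 < δ) (hα : 0 < α) (hτ : 0 < τ) (hσ : 1 / 2 ≤ σ)
    (w : ℕ → V)
    (hscheme : ∀ n : ℕ,
      (σ * ((n + 1 : ℕ) * τ) + (1 - σ) * ((n : ℕ) * τ)) •
          D (τ⁻¹ • (w (n + 1) - w n)) +
        δ • (τ⁻¹ • (w (n + 1) - w n)) +
        α • D (σ • w (n + 1) + (1 - σ) • w n) = 0) :
    ∀ n : ℕ, ‖w (n + 1)‖ ≤ ‖w 0‖ := by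
  have step : ∀ n : ℕ, ‖w (n + 1)‖ ≤ ‖w n‖ := by
    intro n
    set t : ℝ := σ * ((n + 1 : ℕ) * τ) + (1 - σ) * ((n : ℕ) * τ) with ht
    have htval : t = (n : ℝ) * τ + σ * τ := by push_cast [ht]; ring
    have ht0 : 0 ≤ t := by
      rw [htval]
      have : (0 : ℝ) ≤ (n : ℝ) := Nat.cast_nonneg n
      nlinarith
    set cA : ℝ := t + α * τ * σ with hcA
    set cB : ℝ := t - α * τ * (1 - σ) with hcB
    have h := hscheme n
    rw [← ht] at h
    -- turn scheme into δ•w1 + cA•D w1 = δ•w0 + cB•D w0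
    have heq : δ • w (n + 1) + cA • D (w (n + 1))
        = δ • w n + cB • D (w n) := by
      simp only [map_sub, map_add, map_smul, smul_sub, smul_add, smul_smul] at h
      rw [hcA, hcB]
      linear_combination (norm := match_scalars) τ • h
      all_goals field_simp
      all_goals ring
    apply aux_step D hDpos δ cA cB hδ
    · rw [hcA]
      nlinarith [mul_pos hα hτ]
    · rw [hcA, hcB]
      nlinarith [mul_pos hα hτ]
    · rw [hcA, hcB, htval]
      have hn : (0 : ℝ) ≤ (n : ℝ) := Nat.cast_nonneg n
      nlinarith [mul_pos hα hτ, mul_pos hτ hτ]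
    · exact heq
  intro n
  induction n with
  | zero => exact step 0
  | succ k ih => exact le_trans (step (k + 1)) ih
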